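/- Let α be a nonzero algebraic integer with minimal polynomial x^n + a_1 x^{n-1} + ... + a_{n-1} x + a_n over ℚ (with integer coefficients). If (a_n)^j divides (a_j)^n for all 1 ≤ j ≤ n, then α^n / a_n is an algebraic unit up to sign; more precisely α^n = (-1)^n a_n · u for some algebraic unit u. -/

import Mathlib

open Polynomial IsDedekindDomain Multiset

theorem pow_lt_pow_left₀' {Γ₀ : Type*} [LinearOrderedCommGroupWithZero Γ₀] {x y : Γ₀}
    (h : x < y) : ∀ {m : ℕ}, m ≠ 0 → x ^ m < y ^ m := by
  have hy : y ≠ 0 := (zero_le'.trans_lt h).ne'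
  intro m hm
  induction m with
  | zero => exact absurd rfl hm
  | succ k ih =>
    rcases Nat.eq_zero_or_pos k with hk | hk
    · simpa [hk]
    · rw [pow_succ, pow_succ]
      exact mul_lt_mul_of_le_of_lt_of_nonneg_of_pos (ih hk.ne').le h zero_le' (zero_lt_iff.mpr (pow_ne_zero _ hy))

theorem val_multiset_sum_lt {K Γ₀ : Type*} [CommRing K] [LinearOrderedCommGroupWithZero Γ₀]
    (v : Valuation K Γ₀) {g : Γ₀} (hg : g ≠ 0) {s : Multiset K}
    (h : ∀ x ∈ s, v x < g) : v s.sum < g := by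
  induction s using Multiset.induction_on with
  | empty => simpa using zero_lt_iff.mpr hg
  | cons a s ih =>
    rw [Multiset.sum_cons]
    exact lt_of_le_of_lt (v.map_add a s.sum)
      (max_lt (h a (Multiset.mem_cons_self a s)) (ih fun x hx => h x (Multiset.mem_cons_of_mem hx)))

theorem val_multiset_prod_le {K Γ₀ : Type*} [CommRing K] [LinearOrderedCommGroupWithZero Γ₀]
    (v : Valuation K Γ₀) {M : Γ₀} {s : Multiset K}
    (hle : ∀ x ∈ s, v x ≤ M) : v s.prod ≤ M ^ Multiset.card s := by
  rw [map_multiset_prod, ← Multiset.card_map v s]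
  exact Multiset.prod_le_pow_card (s.map v) M (by
    intro y hy
    obtain ⟨z, hz, rfl⟩ := Multiset.mem_map.mp hy
    exact hle z hz)

theorem val_multiset_prod_lt {K Γ₀ : Type*} [CommRing K] [LinearOrderedCommGroupWithZero Γ₀]
    (v : Valuation K Γ₀) {M : Γ₀} (hM0 : M ≠ 0) {s : Multiset K}
    (hle : ∀ x ∈ s, v x ≤ M) {x : K} (hx : x ∈ s) (hxlt : v x < M) :
    v s.prod < M ^ Multiset.card s := by
  obtain ⟨s', rfl⟩ := Multiset.exists_cons_of_mem hx
  rw [Multiset.prod_cons, map_mul, Multiset.card_cons, pow_succ]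
  have h1 : v s'.prod ≤ M ^ Multiset.card s' :=
    val_multiset_prod_le v fun y hy => hle y (Multiset.mem_cons_of_mem hy)
  calc v x * v s'.prod = v s'.prod * v x := mul_comm _ _
    _ < M ^ Multiset.card s' * M :=
      mul_lt_mul_of_le_of_lt_of_nonneg_of_pos h1 hxlt zero_le' (zero_lt_iff.mpr (pow_ne_zero _ hM0))

theorem key_valuation {K Γ₀ : Type*} [Field K] [LinearOrderedCommGroupWithZero Γ₀]
    (v : Valuation K Γ₀) {R : Multiset K} (hnodup : R.Nodup) {n : ℕ}
    (hcard : Multiset.card R = n) (hn1 : 1 ≤ n)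
    (hR0 : ∀ r ∈ R, v r ≠ 0)
    {A : ℕ → K}
    (hesymm : ∀ j, 1 ≤ j → j ≤ n → v (A j) = v (R.esymm j))
    (hAn : v (A n) = v R.prod)
    (hdiv : ∀ j, 1 ≤ j → j ≤ n → v (A j) ^ n ≤ v (A n) ^ j) :
    ∀ r ∈ R, v r ^ n = v (A n) := by
  classical
  have hRne : R ≠ 0 := by
    intro h0
    rw [h0] at hcard; simp at hcard; omega
  have hFne : ((R.map v).toFinset : Finset Γ₀).Nonempty := by
    simp only [Multiset.toFinset_nonempty, Ne, Multiset.map_eq_zero]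
    exact hRne
  set M : Γ₀ := (R.map v).toFinset.max' hFne with hMdef
  have hM : ∀ r ∈ R, v r ≤ M := fun r hr =>
    Finset.le_max' _ _ (Multiset.mem_toFinset.mpr (Multiset.mem_map_of_mem v hr))
  obtain ⟨r₀, hr₀R, hr₀⟩ : ∃ r ∈ R, v r = M := by
    have := (R.map v).toFinset.max'_mem hFne
    rw [Multiset.mem_toFinset, Multiset.mem_map] at this
    exact this
  have hM0 : M ≠ 0 := hr₀ ▸ hR0 r₀ hr₀R
  set T : Multiset K := R.filter (fun r => v r = M) with hTdef
  set j : ℕ := Multiset.card T with hjdef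
  have hTR : T ≤ R := Multiset.filter_le _ _
  have hj1 : 1 ≤ j := by
    have : r₀ ∈ T := Multiset.mem_filter.mpr ⟨hr₀R, hr₀⟩
    have := Multiset.card_pos_iff_exists_mem.mpr ⟨r₀, this⟩
    omega
  have hjn : j ≤ n := hcard ▸ Multiset.card_le_card hTR
  have hvT : v T.prod = M ^ j := by
    rw [map_multiset_prod]
    have : T.map v = Multiset.replicate j M := by
      apply Multiset.eq_replicate.mpr
      constructor
      · rw [Multiset.card_map]
      · intro b hb
        obtain ⟨z, hz, rfl⟩ := Multiset.mem_map.mp hb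
        exact (Multiset.mem_filter.mp hz).2
    rw [this, Multiset.prod_replicate]
  have hTmem : T ∈ R.powersetCard j := Multiset.mem_powersetCard.mpr ⟨hTR, rfl⟩
  have hcons : R.powersetCard j = T ::ₘ (R.powersetCard j).erase T :=
    (Multiset.cons_erase hTmem).symm
  have hTnotin : T ∉ (R.powersetCard j).erase T := by
    have hnd : (R.powersetCard j).Nodup := hnodup.powersetCard
    rw [hcons] at hnd
    exact (Multiset.nodup_cons.mp hnd).1
  have hesymmval : v (R.esymm j) = M ^ j := by
    rw [Multiset.esymm, hcons, Multiset.map_cons, Multiset.sum_cons]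
    have hlt : v (((R.powersetCard j).erase T).map Multiset.prod).sum < M ^ j := by
      apply val_multiset_sum_lt v (pow_ne_zero _ hM0)
      intro x hx
      obtain ⟨s, hs, rfl⟩ := Multiset.mem_map.mp hx
      have hsP : s ∈ R.powersetCard j := Multiset.mem_of_mem_erase hs
      obtain ⟨hsR, hscard⟩ := Multiset.mem_powersetCard.mp hsP
      have hsT : s ≠ T := fun h => hTnotin (h ▸ hs)
      have hex : ∃ y ∈ s, v y < M := by
        by_contra hno
        push_neg at hno
        have hsub : s ≤ T := by
          rw [hTdef, Multiset.le_filter]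
          exact ⟨hsR, fun y hy =>
            le_antisymm (hM y (Multiset.mem_of_le hsR hy)) (hno y hy)⟩
        exact hsT (Multiset.eq_of_le_of_card_le hsub (by rw [hscard]))
      obtain ⟨y, hys, hylt⟩ := hex
      have := val_multiset_prod_lt v hM0
        (fun z hz => hM z (Multiset.mem_of_le hsR hz)) hys hylt
      rwa [hscard] at this
    rw [Valuation.map_add_eq_of_lt_left v (by rw [hvT]; exact hlt), hvT]
  have hMn : v (A n) ≤ M ^ n := by
    rw [hAn, ← hcard]
    exact val_multiset_prod_le v hM
  have hjMn : (M ^ j) ^ n ≤ v (A n) ^ j := by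
    have h := hdiv j hj1 hjn
    rwa [hesymm j hj1 hjn, hesymmval] at h
  have hXeq : v (A n) = M ^ n := by
    rcases lt_or_eq_of_le hMn with hlt | heq
    · exfalso
      have h1 : v (A n) ^ j < (M ^ n) ^ j :=
        pow_lt_pow_left₀' hlt (by omega)
      have h2 : (M ^ j) ^ n = (M ^ n) ^ j := by
        rw [← pow_mul, ← pow_mul, Nat.mul_comm]
      exact absurd (lt_of_le_of_lt (h2 ▸ hjMn) h1) (lt_irrefl _)
    · exact heq
  intro r hr
  have hrM : v r = M := by
    rcases lt_or_eq_of_le (hM r hr) with hlt | heq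
    · exfalso
      have := val_multiset_prod_lt v hM0 hM hr hlt
      rw [hcard, ← hAn, hXeq] at this
      exact absurd this (lt_irrefl _)
    · exact heq
  rw [hrM, hXeq]
theorem assoc_le_of_count_factors_le {α : Type*} [CommMonoidWithZero α] [UniqueFactorizationMonoid α]
    [DecidableEq (Associates α)] [∀ p : Associates α, Decidable (Irreducible p)]
    {a b : Associates α} (ha : a ≠ 0) (hb : b ≠ 0)
    (h : ∀ p : Associates α, Irreducible p → p.count a.factors ≤ p.count b.factors) : a ≤ b := by
  rw [← Associates.factors_le]
  obtain ⟨sa, h_sa⟩ := Associates.factors_eq_some_iff_ne_zero.mpr ha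
  obtain ⟨sb, h_sb⟩ := Associates.factors_eq_some_iff_ne_zero.mpr hb
  rw [h_sa, h_sb] at h ⊢
  rw [WithTop.coe_le_coe, Multiset.le_iff_count]
  rintro ⟨p, hp⟩
  have := h p hp
  rwa [Associates.count_some hp, Associates.count_some hp] at this

theorem dvd_of_intValuation_le {R : Type*} [CommRing R] [IsDedekindDomain R] {y z : R}
    (hy : y ≠ 0) (hz : z ≠ 0)
    (h : ∀ v : HeightOneSpectrum R, v.intValuationDef y ≤ v.intValuationDef z) : z ∣ y := by
  classical
  rw [← Ideal.span_singleton_le_span_singleton, ← Ideal.dvd_iff_le,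
    ← Associates.mk_le_mk_iff_dvd]
  have hsy : (Ideal.span {y} : Ideal R) ≠ 0 := by
    simpa [Ideal.span_singleton_eq_bot] using hy
  have hsz : (Ideal.span {z} : Ideal R) ≠ 0 := by
    simpa [Ideal.span_singleton_eq_bot] using hz
  refine assoc_le_of_count_factors_le (by simpa using hsz) (by simpa using hsy) ?_
  intro p hp
  obtain ⟨J, rfl⟩ := Associates.mk_surjective p
  have hJirr : Irreducible J := Associates.irreducible_mk.mp hp
  have hJprime : Prime J := UniqueFactorizationMonoid.irreducible_iff_prime.mp hJirr
  set v : HeightOneSpectrum R := ⟨J, Ideal.isPrime_of_prime hJprime, hJprime.ne_zero⟩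
  have hv := h v
  rw [v.intValuationDef_if_neg hy, v.intValuationDef_if_neg hz, WithZero.exp_le_exp,
    neg_le_neg_iff, Int.ofNat_le] at hv
  exact hv

open NumberField

set_option maxHeartbeats 1000000 in
/-- If a nonzero algebraic integer `α` has minimal polynomial
`x^n + a_1 x^(n-1) + ... + a_n` over `ℚ` and `(a_n)^j ∣ (a_j)^n` for all `1 ≤ j ≤ n`,
then `α^n = (-1)^n a_n · u` for some algebraic unit `u`. -/
theorem stmt0 (α : ℂ) (hα0 : α ≠ 0) (hint : IsIntegral ℤ α)
    (n : ℕ) (hn : n = (minpoly ℚ α).natDegree)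
    (a : ℕ → ℤ)
    (ha : ∀ j, 1 ≤ j → j ≤ n → (minpoly ℚ α).coeff (n - j) = (a j : ℚ))
    (hdiv : ∀ j, 1 ≤ j → j ≤ n → (a n) ^ j ∣ (a j) ^ n) :
    ∃ u : ℂ, IsIntegral ℤ u ∧ IsIntegral ℤ u⁻¹ ∧
      α ^ n = (-1) ^ n * (a n : ℂ) * u := by
  classical
  have hQint : IsIntegral ℚ α := hint.tower_top
  set f : ℚ[X] := minpoly ℚ α with hf
  have hirr : Irreducible f := minpoly.irreducible hQint
  have hmonic : f.Monic := minpoly.monic hQint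
  have hn1 : 1 ≤ n := hn ▸ minpoly.natDegree_pos hQint
  have hsplitsC : (f.map (algebraMap ℚ ℂ)).Splits := IsAlgClosed.splits _
  set L : IntermediateField ℚ ℂ := IntermediateField.adjoin ℚ (f.rootSet ℂ) with hL
  haveI hsf : IsSplittingField ℚ L f := IntermediateField.adjoin_rootSet_isSplittingField hsplitsC
  haveI : FiniteDimensional ℚ L := IsSplittingField.finiteDimensional L f
  haveI : NumberField L := { to_charZero := inferInstance, to_finiteDimensional := inferInstance }
  have hαmem : α ∈ L := by
    apply IntermediateField.subset_adjoin
    rw [mem_rootSet]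
    exact ⟨minpoly.ne_zero hQint, minpoly.aeval ℚ α⟩
  set αL : L := ⟨α, hαmem⟩ with hαL
  set fL : L[X] := f.map (algebraMap ℚ L) with hfL
  have hsplitL : fL.Splits :=
    (IsSplittingField.splits L f)
  have hmonicL : fL.Monic := hmonic.map _
  set R : Multiset L := fL.roots with hR
  have hcard : Multiset.card R = n := by
    rw [hR, splits_iff_card_roots.mp hsplitL, hfL, natDegree_map, hn]
  have hnodup : R.Nodup := nodup_roots (hirr.separable.map)
  have hαR : αL ∈ R := by
    rw [hR, mem_roots (hmonicL.ne_zero)]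
    have h1 : aeval αL f = 0 := by
      have h2 : algebraMap L ℂ (aeval αL f) = 0 := by
        rw [← aeval_algebraMap_apply]
        have : algebraMap L ℂ αL = α := rfl
        rw [this]
        exact minpoly.aeval ℚ α
      exact (map_eq_zero_iff _ (algebraMap L ℂ).injective).mp h2
    rwa [IsRoot, eval_map_algebraMap]
  -- coefficient facts
  have hcoeffL : ∀ j, 1 ≤ j → j ≤ n → fL.coeff (n - j) = ((a j : ℤ) : L) := by
    intro j h1 h2
    rw [hfL, coeff_map, ha j h1 h2]
    exact map_intCast _ _
  have han0 : a n ≠ 0 := by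
    have h00 : f.coeff 0 = ((a n : ℤ) : ℚ) := by
      have := ha n hn1 le_rfl
      rwa [Nat.sub_self] at this
    have h01 : f.coeff 0 ≠ 0 := minpoly.coeff_zero_ne_zero hQint hα0
    rw [h00] at h01
    exact_mod_cast h01
  have hdegL : fL.natDegree = n := by rw [hfL, natDegree_map, hn]
  have hVieta : ∀ j, 1 ≤ j → j ≤ n → fL.coeff (n - j) = (-1) ^ j * R.esymm j := by
    intro j h1 h2
    have hk : n - j ≤ fL.natDegree := by omega
    have := coeff_eq_esymm_roots_of_splits hsplitL hk
    rw [hmonicL.leadingCoeff, one_mul, hdegL] at this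
    rw [this, Nat.sub_sub_self h2]
  have hprod0 : fL.coeff 0 = (R.map (fun r => -r)).prod := by
    have hfact : fL = (R.map fun r => X - C r).prod :=
      hsplitL.eq_prod_roots_of_monic hmonicL
    rw [coeff_zero_eq_eval_zero, hfact, eval_multiset_prod, Multiset.map_map]
    congr 1
    apply Multiset.map_congr rfl
    intro r _
    simp
  have hcoeff0 : fL.coeff 0 = ((a n : ℤ) : L) := by
    have := hcoeffL n hn1 le_rfl
    rwa [Nat.sub_self] at this
  have hroots0 : ∀ r ∈ R, r ≠ 0 := by
    intro r hr hr0
    have hroot : IsRoot fL r := isRoot_of_mem_roots (hR ▸ hr)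
    rw [hr0, IsRoot, ← coeff_zero_eq_eval_zero, hcoeff0] at hroot
    exact han0 (by exact_mod_cast hroot)
  -- part B : valuation computation
  have partB : ∀ v : HeightOneSpectrum (𝓞 L),
      v.valuation L (αL : L) ^ n = v.valuation L (((a n : ℤ) : L)) := by
    intro v
    have key := key_valuation (v.valuation L) hnodup hcard hn1
      (fun r hr => (Valuation.ne_zero_iff _).mpr (hroots0 r hr))
      (A := fun j => ((a j : ℤ) : L))
      (by
        intro j h1 h2
        show v.valuation L ((a j : ℤ) : L) = v.valuation L (R.esymm j)
        rw [← hcoeffL j h1 h2, hVieta j h1 h2, map_mul, map_pow, Valuation.map_neg,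
          Valuation.map_one, one_pow, one_mul])
      (by
        show v.valuation L ((a n : ℤ) : L) = v.valuation L R.prod
        rw [← hcoeff0, hprod0, map_multiset_prod, map_multiset_prod, Multiset.map_map]
        congr 1
        apply Multiset.map_congr rfl
        intro r _
        exact Valuation.map_neg _ _)
      (by
        intro j h1 h2
        show v.valuation L ((a j : ℤ) : L) ^ n ≤ v.valuation L ((a n : ℤ) : L) ^ j
        obtain ⟨t, ht⟩ := hdiv j h1 h2
        have htL : ((a j : ℤ) : L) ^ n = ((a n : ℤ) : L) ^ j * ((t : ℤ) : L) := by
          exact_mod_cast congrArg (fun z : ℤ => ((z : ℤ) : L)) ht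
        have hvt : v.valuation L ((t : ℤ) : L) ≤ 1 := by
          have hcast : ((t : ℤ) : L) = algebraMap (𝓞 L) L ((t : ℤ) : 𝓞 L) := by
            rw [map_intCast]
          rw [hcast]
          exact v.valuation_le_one _
        calc v.valuation L ((a j : ℤ) : L) ^ n
            = v.valuation L (((a j : ℤ) : L) ^ n) := (map_pow _ _ _).symm
          _ = v.valuation L (((a n : ℤ) : L) ^ j) * v.valuation L ((t : ℤ) : L) := by
              rw [htL, map_mul]
          _ ≤ v.valuation L (((a n : ℤ) : L) ^ j) * 1 := by
              exact mul_le_mul_right hvt _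
          _ = v.valuation L ((a n : ℤ) : L) ^ j := by rw [mul_one, map_pow])
    exact key αL hαR
  -- part C : assemble
  have hαLne : αL ≠ 0 := by
    intro h
    apply hα0
    have : (αL : ℂ) = ((0 : L) : ℂ) := by rw [h]
    exact this
  have hαLint : IsIntegral ℤ αL := by
    have : algebraMap L ℂ αL = α := rfl
    exact (isIntegral_algebraMap_iff (algebraMap L ℂ).injective).mp (this ▸ hint)
  set P : 𝓞 L := (⟨αL, hαLint⟩ : 𝓞 L) ^ n with hP
  set Q : 𝓞 L := ((a n : ℤ) : 𝓞 L) with hQ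
  have hPL : algebraMap (𝓞 L) L P = αL ^ n := by
    rw [hP]; exact map_pow _ _ _
  have hQL : algebraMap (𝓞 L) L Q = ((a n : ℤ) : L) := by
    rw [hQ, map_intCast]
  have hintval : ∀ v : HeightOneSpectrum (𝓞 L), v.intValuationDef P = v.intValuationDef Q := by
    intro v
    have h1 : v.valuation L (algebraMap (𝓞 L) L P) = v.intValuation P :=
      v.valuation_of_algebraMap (K := L) P
    have h2 : v.valuation L (algebraMap (𝓞 L) L Q) = v.intValuation Q :=
      v.valuation_of_algebraMap (K := L) Q
    rw [hPL, map_pow] at h1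
    rw [hQL] at h2
    rw [HeightOneSpectrum.intValuation_apply] at h1 h2
    rw [← h1, ← h2]
    exact partB v
  have hP0 : P ≠ 0 := by
    intro h
    apply hαLne
    have := congrArg (algebraMap (𝓞 L) L) h
    rw [hPL, _root_.map_zero] at this
    exact pow_eq_zero_iff (by omega) |>.mp this
  have hQ0 : Q ≠ 0 := by
    intro h
    apply han0
    have := congrArg (algebraMap (𝓞 L) L) h
    rw [hQL, _root_.map_zero] at this
    exact_mod_cast this
  obtain ⟨w, hw⟩ : Q ∣ P :=
    dvd_of_intValuation_le hP0 hQ0 (fun v => le_of_eq (hintval v))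
  obtain ⟨w', hw'⟩ : P ∣ Q :=
    dvd_of_intValuation_le hQ0 hP0 (fun v => le_of_eq (hintval v).symm)
  have hww' : w * w' = 1 := by
    have : P * 1 = P * (w' * w) := by
      calc P * 1 = P := mul_one P
        _ = Q * w := hw
        _ = P * w' * w := by rw [← hw']
        _ = P * (w' * w) := by ring
    have := mul_left_cancel₀ hP0 this
    rw [mul_comm] at this
    exact this.symm
  set ψ : L →+* ℂ := algebraMap L ℂ with hψ
  set W : ℂ := ψ (algebraMap (𝓞 L) L w) with hW
  set W' : ℂ := ψ (algebraMap (𝓞 L) L w') with hW'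
  have hWint : IsIntegral ℤ W :=
    (NumberField.RingOfIntegers.isIntegral_coe w).map ψ.toIntAlgHom
  have hW'int : IsIntegral ℤ W' :=
    (NumberField.RingOfIntegers.isIntegral_coe w').map ψ.toIntAlgHom
  have hWW' : W * W' = 1 := by
    rw [hW, hW', ← map_mul, ← map_mul, hww', map_one, map_one]
  have hsign : ((-1 : ℂ) ^ n) * ((-1 : ℂ) ^ n) = 1 := by
    rw [← pow_add, ← two_mul, pow_mul]
    norm_num
  refine ⟨(-1) ^ n * W, ?_, ?_, ?_⟩
  · exact ((isIntegral_one.neg).pow n).mul hWint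
  · have hinv : ((-1 : ℂ) ^ n * W)⁻¹ = (-1) ^ n * W' := by
      apply inv_eq_of_mul_eq_one_right
      calc (-1 : ℂ) ^ n * W * ((-1) ^ n * W')
          = ((-1 : ℂ) ^ n * (-1) ^ n) * (W * W') := by ring
        _ = 1 := by rw [hsign, hWW', mul_one]
    rw [hinv]
    exact ((isIntegral_one.neg).pow n).mul hW'int
  · have hmapped : α ^ n = (a n : ℂ) * W := by
      have hLeq : αL ^ n = ((a n : ℤ) : L) * algebraMap (𝓞 L) L w := by
        have := congrArg (algebraMap (𝓞 L) L) hw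
        rw [hPL, map_mul, hQL] at this
        exact this
      have := congrArg ψ hLeq
      rw [map_mul, map_pow] at this
      have hψα : ψ αL = α := rfl
      have hψan : ψ ((a n : ℤ) : L) = ((a n : ℤ) : ℂ) := map_intCast _ _
      rw [hψα, hψan] at this
      exact this
    calc α ^ n = (a n : ℂ) * W := hmapped
      _ = ((-1 : ℂ) ^ n * (-1) ^ n) * ((a n : ℂ) * W) := by rw [hsign, one_mul]
      _ = (-1) ^ n * (a n : ℂ) * ((-1) ^ n * W) := by ring
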